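/- Let V be a finite-dimensional real vector space ordered by a closed, convex, salient and generating cone C, and let u be an order unit, i.e. a strictly positive functional in the interior of the dual cone C*. Define the base norm ‖x‖ = max { f(x) : f ∈ V*, -u ≤ f ≤ u }. Then for every x ∈ V, ‖x‖ = min { u(x₊) + u(x₋) : x₊, x₋ ∈ C, x = x₊ - x₋ }. -/

import Mathlib

set_option synthInstance.maxHeartbeats 1000000
set_option maxHeartbeats 1600000


/-- The dual base norm formula in a GPT: the base norm, defined via the order
interval `[-u, u]` in the dual, equals the minimal total mass of a decomposition
`x = x₊ - x₋` with `x₊, x₋` in the cone. -/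
theorem base_norm_dual_formula
    {V : Type*} [NormedAddCommGroup V] [NormedSpace ℝ V] [FiniteDimensional ℝ V]
    (C : Set V) (hclosed : IsClosed C) (hconv : Convex ℝ C)
    (hcone : ∀ a ∈ C, ∀ t : ℝ, 0 ≤ t → t • a ∈ C)
    (hsalient : C ∩ (-C) = {0})
    (hgen : Submodule.span ℝ C = ⊤)
    (u : V →L[ℝ] ℝ)
    (hu : u ∈ interior {f : V →L[ℝ] ℝ | ∀ a ∈ C, 0 ≤ f a})
    (x : V) :
    ∃ m : ℝ,
      IsGreatest {r : ℝ | ∃ f : V →L[ℝ] ℝ,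
        (∀ a ∈ C, 0 ≤ (u - f) a) ∧ (∀ a ∈ C, 0 ≤ (u + f) a) ∧ r = f x} m ∧
      IsLeast {r : ℝ | ∃ xp ∈ C, ∃ xm ∈ C, x = xp - xm ∧ r = u xp + u xm} m := by
  have hu' : ∀ a ∈ C, 0 ≤ u a := interior_subset hu
  have h0 : (0 : V) ∈ C := by
    have : (0 : V) ∈ C ∩ (-C) := by rw [hsalient]; rfl
    exact this.1
  -- the cone is closed under addition
  have hadd : ∀ a ∈ C, ∀ b ∈ C, a + b ∈ C := by
    intro a ha b hb
    have hmid : (1/2 : ℝ) • a + (1/2 : ℝ) • b ∈ C :=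
      hconv ha hb (by norm_num) (by norm_num) (by norm_num)
    have := hcone _ hmid 2 (by norm_num)
    simpa [smul_add, smul_smul] using this
  -- every vector decomposes as a difference of two cone elements
  have hdecomp : ∀ y : V, ∃ a ∈ C, ∃ b ∈ C, y = a - b := by
    let M : Submodule ℝ V :=
      { carrier := {y | ∃ a ∈ C, ∃ b ∈ C, y = a - b}
        zero_mem' := ⟨0, h0, 0, h0, by simp⟩
        add_mem' := by
          rintro y z ⟨a, ha, b, hb, rfl⟩ ⟨a', ha', b', hb', rfl⟩
          exact ⟨a + a', hadd a ha a' ha', b + b', hadd b hb b' hb', by abel⟩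
        smul_mem' := by
          rintro c y ⟨a, ha, b, hb, rfl⟩
          rcases le_or_gt 0 c with hc | hc
          · exact ⟨c • a, hcone a ha c hc, c • b, hcone b hb c hc, by
              simp [smul_sub]⟩
          · refine ⟨(-c) • b, hcone b hb _ (by linarith), (-c) • a,
              hcone a ha _ (by linarith), ?_⟩
            simp [smul_sub, neg_smul]
            abel }
    have hCM : C ⊆ (M : Set V) := fun a ha => ⟨a, ha, 0, h0, by simp⟩
    have htop : (⊤ : Submodule ℝ V) ≤ M := hgen ▸ Submodule.span_le.mpr hCM
    exact fun y => htop (Submodule.mem_top : y ∈ ⊤)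
  -- the decomposition-mass set and its infimum
  set S : V → Set ℝ := fun y => {r | ∃ a ∈ C, ∃ b ∈ C, y = a - b ∧ r = u a + u b}
    with hS
  have hSne : ∀ y, (S y).Nonempty := by
    intro y
    obtain ⟨a, ha, b, hb, hy⟩ := hdecomp y
    exact ⟨u a + u b, a, ha, b, hb, hy, rfl⟩
  have hSpos : ∀ y, ∀ r ∈ S y, 0 ≤ r := by
    rintro y r ⟨a, ha, b, hb, -, rfl⟩
    exact add_nonneg (hu' a ha) (hu' b hb)
  have hSbdd : ∀ y, BddBelow (S y) := fun y => ⟨0, fun r hr => hSpos y r hr⟩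
  set p : V → ℝ := fun y => sInf (S y) with hp
  have hp_le : ∀ y, ∀ a ∈ C, ∀ b ∈ C, y = a - b → p y ≤ u a + u b := by
    intro y a ha b hb hy
    exact csInf_le (hSbdd y) ⟨a, ha, b, hb, hy, rfl⟩
  have hp_nonneg : ∀ y, 0 ≤ p y := fun y => le_csInf (hSne y) (hSpos y)
  have hp_zero : p 0 = 0 := by
    have h1 : p 0 ≤ u 0 + u 0 := hp_le 0 0 h0 0 h0 (by simp)
    simp only [map_zero, add_zero] at h1
    exact le_antisymm h1 (hp_nonneg 0)
  have hp_add : ∀ y z, p (y + z) ≤ p y + p z := by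
    intro y z
    have key : ∀ r ∈ S y, ∀ s ∈ S z, p (y + z) ≤ r + s := by
      rintro r ⟨a, ha, b, hb, rfl, rfl⟩ s ⟨a', ha', b', hb', rfl, rfl⟩
      have := hp_le ((a - b) + (a' - b')) (a + a') (hadd a ha a' ha')
        (b + b') (hadd b hb b' hb') (by abel)
      calc p ((a - b) + (a' - b')) ≤ u (a + a') + u (b + b') := this
        _ = (u a + u b) + (u a' + u b') := by simp [map_add]; ring
    have h1 : ∀ s ∈ S z, p (y + z) - s ≤ p y := by
      intro s hs
      exact le_csInf (hSne y) fun r hr => by linarith [key r hr s hs]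
    have h2 : p (y + z) - p y ≤ p z :=
      le_csInf (hSne z) fun s hs => by linarith [h1 s hs]
    linarith
  have hp_smul_le : ∀ c : ℝ, 0 < c → ∀ y, p (c • y) ≤ c * p y := by
    intro c hc y
    have : ∀ r ∈ S y, p (c • y) ≤ c * r := by
      rintro r ⟨a, ha, b, hb, rfl, rfl⟩
      have := hp_le (c • (a - b)) (c • a) (hcone a ha c hc.le)
        (c • b) (hcone b hb c hc.le) (by simp [smul_sub])
      calc p (c • (a - b)) ≤ u (c • a) + u (c • b) := this
        _ = c * (u a + u b) := by simp [map_smul]; ring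
    have h1 : (fun r => c⁻¹ * r) (p (c • y)) ≤ p y := by
      refine le_csInf (hSne y) fun r hr => ?_
      have := this r hr
      have hcinv : (0:ℝ) < c⁻¹ := inv_pos.mpr hc
      calc c⁻¹ * p (c • y) ≤ c⁻¹ * (c * r) := by
            exact mul_le_mul_of_nonneg_left this hcinv.le
        _ = r := by field_simp
    have := mul_le_mul_of_nonneg_left h1 hc.le
    calc p (c • y) = c * (c⁻¹ * p (c • y)) := by field_simp
      _ ≤ c * p y := this
  have hp_smul : ∀ c : ℝ, 0 < c → ∀ y, p (c • y) = c * p y := by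
    intro c hc y
    refine le_antisymm (hp_smul_le c hc y) ?_
    have := hp_smul_le c⁻¹ (inv_pos.mpr hc) (c • y)
    rw [smul_smul, inv_mul_cancel₀ hc.ne', one_smul] at this
    calc c * p y ≤ c * (c⁻¹ * p (c • y)) := mul_le_mul_of_nonneg_left this hc.le
      _ = p (c • y) := by field_simp
  -- strict positivity: `u` dominates a multiple of the norm on `C`
  obtain ⟨ε, hε, hball⟩ := Metric.mem_nhds_iff.mp (mem_interior_iff_mem_nhds.mp hu)
  have hstrict : ∀ a ∈ C, ε / 2 * ‖a‖ ≤ u a := by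
    intro a ha
    rcases eq_or_ne a 0 with rfl | ha0
    · simp
    obtain ⟨g, hg1, hg2⟩ := exists_dual_vector ℝ a (norm_ne_zero_iff.mpr ha0)
    have hg2' : g a = ‖a‖ := by simpa using hg2
    have hmem : u - (ε / 2) • g ∈ Metric.ball u ε := by
      rw [Metric.mem_ball, dist_eq_norm]
      have heq : u - (ε / 2) • g - u = -((ε / 2) • g) := by abel
      rw [heq, norm_neg]
      calc ‖(ε / 2) • g‖ ≤ ‖(ε / 2 : ℝ)‖ * ‖g‖ := ContinuousLinearMap.opNorm_smul_le _ _
        _ = ε / 2 := by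
            rw [hg1, Real.norm_eq_abs, abs_of_pos (by linarith), mul_one]
        _ < ε := by linarith
    have := hball hmem a ha
    simp only [Set.mem_setOf_eq, ContinuousLinearMap.sub_apply,
      ContinuousLinearMap.smul_apply, smul_eq_mul] at this
    rw [hg2'] at this
    linarith
  -- the optimal decomposition is attained
  have hTcompact : ∃ q : V × V, q.1 ∈ C ∧ q.2 ∈ C ∧ x = q.1 - q.2 ∧
      u q.1 + u q.2 = p x := by
    set T : Set (V × V) := {q | q.1 ∈ C ∧ q.2 ∈ C ∧ q.1 - q.2 = x ∧
      u q.1 + u q.2 ≤ p x + 1} with hT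
    have hTne : T.Nonempty := by
      obtain ⟨r, hr, hrlt⟩ := Real.lt_sInf_add_pos (hSne x) one_pos
      obtain ⟨a, ha, b, hb, hx, rfl⟩ := hr
      exact ⟨(a, b), ha, hb, hx.symm, hrlt.le⟩
    have hcont : Continuous fun q : V × V => u q.1 + u q.2 :=
      (u.continuous.comp continuous_fst).add (u.continuous.comp continuous_snd)
    have hTclosed : IsClosed T :=
      (hclosed.preimage continuous_fst).inter
        ((hclosed.preimage continuous_snd).inter
          ((isClosed_eq (continuous_fst.sub continuous_snd) continuous_const).inter
            (isClosed_le hcont continuous_const)))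
    have hTbdd : Bornology.IsBounded T := by
      refine (Metric.isBounded_closedBall (x := (0 : V × V))
        (r := (p x + 1) / (ε / 2))).subset ?_
      rintro ⟨a, b⟩ ⟨ha, hb, -, hle⟩
      have hana : ε / 2 * ‖a‖ ≤ u a := hstrict a ha
      have hanb : ε / 2 * ‖b‖ ≤ u b := hstrict b hb
      have hua : 0 ≤ u a := hu' a ha
      have hub : 0 ≤ u b := hu' b hb
      have hna : ‖a‖ ≤ (p x + 1) / (ε / 2) := by
        rw [le_div_iff₀ (by linarith)]
        nlinarith
      have hnb : ‖b‖ ≤ (p x + 1) / (ε / 2) := by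
        rw [le_div_iff₀ (by linarith)]
        nlinarith
      simp only [Metric.mem_closedBall, dist_zero_right, Prod.norm_def]
      exact max_le hna hnb
    obtain ⟨q, hqT, hqmin⟩ := (Metric.isCompact_of_isClosed_isBounded hTclosed
      hTbdd).exists_isMinOn hTne hcont.continuousOn
    obtain ⟨hq1, hq2, hq3, hq4⟩ := hqT
    refine ⟨q, hq1, hq2, hq3.symm, ?_⟩
    refine le_antisymm ?_ (hp_le x q.1 hq1 q.2 hq2 hq3.symm)
    by_contra hlt
    push_neg at hlt
    obtain ⟨r, hr, hrlt⟩ := exists_lt_of_csInf_lt (hSne x) hlt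
    obtain ⟨a, ha, b, hb, hxab, rfl⟩ := hr
    have : (a, b) ∈ T := ⟨ha, hb, hxab.symm, by linarith⟩
    exact absurd (hqmin this) (by simpa using hrlt)
  obtain ⟨q, hq1, hq2, hq3, hq4⟩ := hTcompact
  -- we also bound `p` on single cone elements
  have hp_le_C : ∀ a ∈ C, p a ≤ u a := by
    intro a ha
    have := hp_le a a ha 0 h0 (by simp)
    simpa using this
  have hp_le_negC : ∀ a ∈ C, p (-a) ≤ u a := by
    intro a ha
    have := hp_le (-a) 0 h0 a ha (by simp)
    simpa using this
  have hp_negx : 0 ≤ p x + p (-x) := by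
    have := hp_add x (-x)
    simp only [add_neg_cancel, hp_zero] at this
    linarith
  -- find the optimal functional via Hahn-Banach
  have hfexists : ∃ g : V →ₗ[ℝ] ℝ, g x = p x ∧ ∀ y, g y ≤ p y := by
    rcases eq_or_ne x 0 with rfl | hx0
    · exact ⟨0, by simp [hp_zero], fun y => hp_nonneg y⟩
    set f₀ : V →ₗ.[ℝ] ℝ := LinearPMap.mkSpanSingleton x (p x) hx0 with hf₀
    have hbound : ∀ y : f₀.domain, f₀ y ≤ p y := by
      rintro ⟨y, hy⟩
      obtain ⟨t, rfl⟩ := Submodule.mem_span_singleton.mp hy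
      have happ : f₀ ⟨t • x, hy⟩ = t • p x := LinearPMap.mkSpanSingleton'_apply _ _ _ t _
      rw [happ]
      rcases lt_trichotomy t 0 with ht | ht | ht
      · have : p (t • x) = (-t) * p (-x) := by
          have : t • x = (-t) • (-x) := by simp
          rw [this, hp_smul (-t) (by linarith) (-x)]
        rw [this]
        have := hp_nonneg x
        simp only [smul_eq_mul]
        nlinarith
      · simp [ht, hp_zero]
      · rw [hp_smul t ht x]; simp
    obtain ⟨g, hg1, hg2⟩ := exists_extension_of_le_sublinear f₀ p hp_smul hp_add hbound
    refine ⟨g, ?_, hg2⟩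
    have hxmem : x ∈ f₀.domain := Submodule.mem_span_singleton_self x
    have := hg1 ⟨x, hxmem⟩
    rw [LinearPMap.mkSpanSingleton_apply ℝ ℝ hx0 (p x)] at this
    exact this
  obtain ⟨g, hgx, hgle⟩ := hfexists
  set f : V →L[ℝ] ℝ := LinearMap.toContinuousLinearMap g with hf
  have hfapp : ∀ y, f y = g y := fun y => rfl
  refine ⟨p x, ⟨⟨f, ?_, ?_, ?_⟩, ?_⟩, ⟨⟨q.1, hq1, q.2, hq2, hq3, hq4.symm⟩, ?_⟩⟩
  · intro a ha
    have h1 : g a ≤ u a := le_trans (hgle a) (hp_le_C a ha)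
    simp only [ContinuousLinearMap.sub_apply, hfapp]
    linarith
  · intro a ha
    have h1 : g (-a) ≤ u a := le_trans (hgle (-a)) (hp_le_negC a ha)
    rw [map_neg] at h1
    simp only [ContinuousLinearMap.add_apply, hfapp]
    linarith
  · rw [hfapp, hgx]
  · rintro r ⟨f', hf'1, hf'2, rfl⟩
    have ha : f' q.1 ≤ u q.1 := by
      have := hf'1 q.1 hq1
      simp only [ContinuousLinearMap.sub_apply] at this
      linarith
    have hb : -(u q.2) ≤ f' q.2 := by
      have := hf'2 q.2 hq2
      simp only [ContinuousLinearMap.add_apply] at this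
      linarith
    have : f' x = f' q.1 - f' q.2 := by rw [hq3, map_sub]
    rw [this, ← hq4]
    linarith
  · rintro r ⟨a, ha, b, hb, hx, rfl⟩
    exact hp_le x a ha b hb hx
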